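/- For any two probability measures f, g on ℝ^d with means μ1, μ2 and covariance matrices Σ1, Σ2, the squared 2-Wasserstein distance satisfies W₂(f, g)² ≥ ‖μ1 − μ2‖² + trace(Σ1 + Σ2 − 2(Σ1^{1/2} Σ2 Σ1^{1/2})^{1/2}). -/

import Mathlib

open MeasureTheory Matrix

noncomputable def W2sq {d : ℕ} (μ ν : Measure (Fin d → ℝ)) : ℝ :=
  sInf {r | ∃ π : Measure ((Fin d → ℝ) × (Fin d → ℝ)),
    π.map Prod.fst = μ ∧ π.map Prod.snd = ν ∧
    r = ∫ p, ∑ i, (p.1 i - p.2 i) ^ 2 ∂π}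

noncomputable def W2 {d : ℕ} (μ ν : Measure (Fin d → ℝ)) : ℝ :=
  Real.sqrt (W2sq μ ν)

open scoped ComplexOrder in
/-- The positive semidefinite square root of a positive semidefinite matrix
(the definition of `Matrix.PosSemidef.sqrt` in the older Mathlib). -/
noncomputable def Matrix.PosSemidef.sqrt {n 𝕜 : Type*} [Fintype n] [RCLike 𝕜] [DecidableEq n]
    {A : Matrix n n 𝕜} (hA : Matrix.PosSemidef A) : Matrix n n 𝕜 :=
  hA.1.eigenvectorUnitary.1 * diagonal ((↑) ∘ (√·) ∘ hA.1.eigenvalues) *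
  (star hA.1.eigenvectorUnitary : Matrix n n 𝕜)

section Helpers

variable {d : ℕ}

lemma Matrix.PosSemidef.posSemidef_sqrt {n : Type*} [Fintype n] [DecidableEq n]
    {A : Matrix n n ℝ} (hA : A.PosSemidef) : hA.sqrt.PosSemidef := by
  unfold Matrix.PosSemidef.sqrt
  have := (Matrix.PosSemidef.diagonal (R := ℝ)
    (d := (RCLike.ofReal ∘ (√·) ∘ hA.1.eigenvalues : n → ℝ)) (fun i => by simp [Real.sqrt_nonneg])).mul_mul_conjTranspose_same
    (hA.1.eigenvectorUnitary : Matrix n n ℝ)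
  simpa [star_eq_conjTranspose] using this

lemma Matrix.PosSemidef.sqrt_mul_self {n : Type*} [Fintype n] [DecidableEq n]
    {A : Matrix n n ℝ} (hA : A.PosSemidef) : hA.sqrt * hA.sqrt = A := by
  let C : Matrix n n ℝ := hA.1.eigenvectorUnitary
  let E := diagonal (RCLike.ofReal ∘ (√·) ∘ hA.1.eigenvalues : n → ℝ)
  suffices C * (E * (star C * C) * E) * star C = A by
    rw [Matrix.PosSemidef.sqrt]
    simpa only [C, E, ← mul_assoc] using this
  have : E * E = diagonal (RCLike.ofReal ∘ hA.1.eigenvalues) := by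
    rw [diagonal_mul_diagonal]
    congr! with v
    simp [← pow_two, Real.sq_sqrt (hA.eigenvalues_nonneg v)]
  have hs := hA.1.spectral_theorem
  rw [Unitary.conjStarAlgAut_apply] at hs
  have hCC : star C * C = 1 := Unitary.coe_star_mul_self _
  rw [hCC, Matrix.mul_one, this]
  exact hs.symm

lemma dot_quad (M : Matrix (Fin d) (Fin d) ℝ) (v : Fin d → ℝ) :
    v ⬝ᵥ M *ᵥ v = ∑ i, ∑ j, M i j * (v i * v j) := by
  simp only [dotProduct, mulVec, Finset.mul_sum]
  exact Finset.sum_congr rfl fun i _ => Finset.sum_congr rfl fun j _ => by ring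



lemma sqrt_posDef {M : Matrix (Fin d) (Fin d) ℝ} (hM : M.PosDef) (hpsd : M.PosSemidef) :
    hpsd.sqrt.PosDef := by
  refine Matrix.PosDef.of_dotProduct_mulVec_pos hpsd.posSemidef_sqrt.isHermitian fun x hx => ?_
  rcases lt_or_eq_of_le (hpsd.posSemidef_sqrt.dotProduct_mulVec_nonneg x) with h | h
  · exact h
  · exfalso
    have hz : hpsd.sqrt *ᵥ x = 0 :=
      (hpsd.posSemidef_sqrt.dotProduct_mulVec_zero_iff x).mp h.symm
    have hMx : M *ᵥ x = 0 := by
      calc M *ᵥ x = (hpsd.sqrt * hpsd.sqrt) *ᵥ x := by rw [hpsd.sqrt_mul_self]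
        _ = hpsd.sqrt *ᵥ (hpsd.sqrt *ᵥ x) := by rw [mulVec_mulVec]
        _ = 0 := by rw [hz, mulVec_zero]
    have h2 := hM.dotProduct_mulVec_pos hx
    rw [hMx, dotProduct_zero] at h2
    exact lt_irrefl _ h2

lemma posDef_conj {R B : Matrix (Fin d) (Fin d) ℝ} (hR : R.PosDef) (hB : B.PosDef) :
    (B * R * B).PosDef := by
  have hBH : Bᴴ = B := hB.isHermitian
  refine Matrix.PosDef.of_dotProduct_mulVec_pos ?_ fun x hx => ?_
  · show (B * R * B)ᴴ = B * R * B
    calc (B * R * B)ᴴ = Bᴴ * (Rᴴ * Bᴴ) := by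
          rw [conjTranspose_mul, conjTranspose_mul]
      _ = B * R * B := by rw [hBH, hR.isHermitian, Matrix.mul_assoc]
  · have hBx : B *ᵥ x ≠ 0 := by
      intro h
      apply hx
      have h1 : B⁻¹ *ᵥ (B *ᵥ x) = x := by
        rw [mulVec_mulVec, Matrix.nonsing_inv_mul B hB.det_pos.ne'.isUnit, one_mulVec]
      rw [h, mulVec_zero] at h1
      exact h1.symm
    have h2 := hR.dotProduct_mulVec_pos hBx
    calc (0:ℝ) < star (B *ᵥ x) ⬝ᵥ R *ᵥ (B *ᵥ x) := h2
      _ = star x ⬝ᵥ (B * R * B) *ᵥ x := by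
        simp only [star_mulVec, Matrix.dotProduct_mulVec, vecMul_vecMul, hBH]

lemma quad_ineq {T T' : Matrix (Fin d) (Fin d) ℝ} (hT : T.PosDef)
    (hTsymm : Tᵀ = T) (hTT' : T * T' = 1) (u w : Fin d → ℝ) :
    2 * (u ⬝ᵥ w) ≤ u ⬝ᵥ T *ᵥ u + w ⬝ᵥ T' *ᵥ w := by
  set z := u - T' *ᵥ w with hz
  have h0 : (0:ℝ) ≤ z ⬝ᵥ T *ᵥ z := by
    have := hT.posSemidef.dotProduct_mulVec_nonneg z
    simpa using this
  have hTz : T *ᵥ z = T *ᵥ u - w := by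
    rw [hz, mulVec_sub, mulVec_mulVec, hTT', one_mulVec]
  have hsym : ∀ a b : Fin d → ℝ, a ⬝ᵥ T *ᵥ b = (T *ᵥ a) ⬝ᵥ b := by
    intro a b
    rw [Matrix.dotProduct_mulVec, ← Matrix.vecMul_transpose, hTsymm]
  have hcross : (T' *ᵥ w) ⬝ᵥ (T *ᵥ u) = u ⬝ᵥ w := by
    rw [hsym (T' *ᵥ w) u, mulVec_mulVec, hTT', one_mulVec, dotProduct_comm]
  have hexp : z ⬝ᵥ T *ᵥ z = u ⬝ᵥ T *ᵥ u + w ⬝ᵥ T' *ᵥ w - 2 * (u ⬝ᵥ w) := by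
    rw [hTz, hz, sub_dotProduct, dotProduct_sub, dotProduct_sub,
      hcross, dotProduct_comm (T' *ᵥ w) w]
    ring
  linarith [h0, hexp]

lemma gelbrich_matrices {S1 S2 : Matrix (Fin d) (Fin d) ℝ} (h1 : S1.PosDef) (h2 : S2.PosDef)
    (h12 : (h1.posSemidef.sqrt * S2 * h1.posSemidef.sqrt).PosSemidef) :
    ∃ T T' : Matrix (Fin d) (Fin d) ℝ, T.PosDef ∧ Tᵀ = T ∧ T * T' = 1 ∧
      (T * S1).trace = h12.sqrt.trace ∧ (T' * S2).trace = h12.sqrt.trace := by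
  set A := h1.posSemidef.sqrt with hAdef
  have hApd : A.PosDef := sqrt_posDef h1 h1.posSemidef
  have hAA : A * A = S1 := h1.posSemidef.sqrt_mul_self
  have hMpd : (A * S2 * A).PosDef := posDef_conj h2 hApd
  set R := h12.sqrt with hRdef
  have hRpd : R.PosDef := sqrt_posDef hMpd h12
  have hRR : R * R = A * S2 * A := h12.sqrt_mul_self
  have hAinv : A⁻¹.PosDef := hApd.inv
  have hAiA : A⁻¹ * A = 1 := Matrix.nonsing_inv_mul A hApd.det_pos.ne'.isUnit
  have hAAi : A * A⁻¹ = 1 := Matrix.mul_nonsing_inv A hApd.det_pos.ne'.isUnit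
  have hRiR : R⁻¹ * R = 1 := Matrix.nonsing_inv_mul R hRpd.det_pos.ne'.isUnit
  have hRRi : R * R⁻¹ = 1 := Matrix.mul_nonsing_inv R hRpd.det_pos.ne'.isUnit
  refine ⟨A⁻¹ * R * A⁻¹, A * R⁻¹ * A, posDef_conj hRpd hAinv, ?_, ?_, ?_, ?_⟩
  · have h : (A⁻¹ * R * A⁻¹)ᴴ = A⁻¹ * R * A⁻¹ := (posDef_conj hRpd hAinv).isHermitian
    simpa using h
  · calc (A⁻¹ * R * A⁻¹) * (A * R⁻¹ * A)
        = A⁻¹ * R * ((A⁻¹ * A) * R⁻¹ * A) := by noncomm_ring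
      _ = A⁻¹ * ((R * R⁻¹) * A) := by rw [hAiA]; noncomm_ring
      _ = A⁻¹ * A := by rw [hRRi, Matrix.one_mul]
      _ = 1 := hAiA
  · calc (A⁻¹ * R * A⁻¹ * S1).trace = (A⁻¹ * (R * ((A⁻¹ * A) * A))).trace := by
          rw [← hAA]; noncomm_ring
      _ = (A⁻¹ * (R * A)).trace := by rw [hAiA, Matrix.one_mul]
      _ = ((R * A) * A⁻¹).trace := Matrix.trace_mul_comm _ _
      _ = R.trace := by rw [Matrix.mul_assoc, hAAi, Matrix.mul_one]
  · calc (A * R⁻¹ * A * S2).trace = (A * (R⁻¹ * A * S2)).trace := by noncomm_ring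
      _ = ((R⁻¹ * A * S2) * A).trace := Matrix.trace_mul_comm _ _
      _ = (R⁻¹ * (A * S2 * A)).trace := by noncomm_ring
      _ = (R⁻¹ * (R * R)).trace := by rw [hRR]
      _ = R.trace := by rw [← Matrix.mul_assoc, hRiR, Matrix.one_mul]



lemma int_sq (f : Measure (Fin d → ℝ)) (hf : Integrable (fun x => ∑ i, x i ^ 2) f)
    (i : Fin d) : Integrable (fun x => x i ^ 2) f := by
  refine hf.mono ((measurable_pi_apply i).pow_const 2).aestronglyMeasurable (Filter.Eventually.of_forall fun x => ?_)
  have h1 : x i ^ 2 ≤ ∑ j, x j ^ 2 :=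
    Finset.single_le_sum (fun j _ => sq_nonneg (x j)) (Finset.mem_univ i)
  have h2 : (0:ℝ) ≤ ∑ j, x j ^ 2 := Finset.sum_nonneg fun j _ => sq_nonneg _
  simp only [Real.norm_eq_abs, abs_of_nonneg (sq_nonneg (x i)), abs_of_nonneg h2]
  exact h1

lemma int_lin (f : Measure (Fin d → ℝ)) [IsFiniteMeasure f]
    (hf : Integrable (fun x => ∑ i, x i ^ 2) f) (i : Fin d) :
    Integrable (fun x => x i) f := by
  refine ((integrable_const (1:ℝ)).add hf).mono (measurable_pi_apply i).aestronglyMeasurable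
    (Filter.Eventually.of_forall fun x => ?_)
  have h1 : x i ^ 2 ≤ ∑ j, x j ^ 2 :=
    Finset.single_le_sum (fun j _ => sq_nonneg (x j)) (Finset.mem_univ i)
  have h2 : (0:ℝ) ≤ ∑ j, x j ^ 2 := Finset.sum_nonneg fun j _ => sq_nonneg _
  simp only [Real.norm_eq_abs, Pi.add_apply, abs_of_nonneg (by linarith : (0:ℝ) ≤ 1 + ∑ j, x j ^ 2)]
  rcases abs_cases (x i) with ⟨h, _⟩ | ⟨h, _⟩ <;> nlinarith [sq_nonneg (x i - 1), sq_nonneg (x i + 1)]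

lemma int_mul (f : Measure (Fin d → ℝ)) (hf : Integrable (fun x => ∑ i, x i ^ 2) f)
    (i j : Fin d) : Integrable (fun x => x i * x j) f := by
  refine hf.mono ((measurable_pi_apply i).mul (measurable_pi_apply j)).aestronglyMeasurable (Filter.Eventually.of_forall fun x => ?_)
  have h1 : x i ^ 2 ≤ ∑ k, x k ^ 2 :=
    Finset.single_le_sum (fun k _ => sq_nonneg (x k)) (Finset.mem_univ i)
  have h2 : x j ^ 2 ≤ ∑ k, x k ^ 2 :=
    Finset.single_le_sum (fun k _ => sq_nonneg (x k)) (Finset.mem_univ j)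
  have h3 : (0:ℝ) ≤ ∑ k, x k ^ 2 := Finset.sum_nonneg fun k _ => sq_nonneg _
  simp only [Real.norm_eq_abs, abs_of_nonneg h3, abs_mul]
  nlinarith [sq_nonneg (|x i| - |x j|), sq_abs (x i), sq_abs (x j),
    abs_nonneg (x i), abs_nonneg (x j)]

lemma int_cov (f : Measure (Fin d → ℝ)) [IsFiniteMeasure f]
    (hf : Integrable (fun x => ∑ i, x i ^ 2) f) (μ : Fin d → ℝ) (i j : Fin d) :
    Integrable (fun x => (x i - μ i) * (x j - μ j)) f := by
  have he : (fun x : Fin d → ℝ => (x i - μ i) * (x j - μ j))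
      = fun x => (x i * x j - μ j * x i) - (μ i * x j - μ i * μ j) := by
    funext x; ring
  rw [he]
  exact ((int_mul f hf i j).sub ((int_lin f hf i).const_mul _)).sub
    (((int_lin f hf j).const_mul _).sub (integrable_const _))

lemma lift_int_fst {f : Measure (Fin d → ℝ)} {π : Measure ((Fin d → ℝ) × (Fin d → ℝ))}
    (hfst : π.map Prod.fst = f) {h : (Fin d → ℝ) → ℝ} (hm : Measurable h)
    (hi : Integrable h f) : Integrable (fun p => h p.1) π := by
  have : Integrable h (π.map Prod.fst) := by rwa [hfst]
  exact (integrable_map_measure hm.aestronglyMeasurable measurable_fst.aemeasurable).mp this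

lemma lift_integral_fst {f : Measure (Fin d → ℝ)} {π : Measure ((Fin d → ℝ) × (Fin d → ℝ))}
    (hfst : π.map Prod.fst = f) {h : (Fin d → ℝ) → ℝ} (hm : Measurable h) :
    ∫ p, h p.1 ∂π = ∫ x, h x ∂f := by
  rw [← hfst, integral_map measurable_fst.aemeasurable hm.aestronglyMeasurable]

lemma lift_int_snd {g : Measure (Fin d → ℝ)} {π : Measure ((Fin d → ℝ) × (Fin d → ℝ))}
    (hsnd : π.map Prod.snd = g) {h : (Fin d → ℝ) → ℝ} (hm : Measurable h)
    (hi : Integrable h g) : Integrable (fun p => h p.2) π := by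
  have : Integrable h (π.map Prod.snd) := by rwa [hsnd]
  exact (integrable_map_measure hm.aestronglyMeasurable measurable_snd.aemeasurable).mp this

lemma lift_integral_snd {g : Measure (Fin d → ℝ)} {π : Measure ((Fin d → ℝ) × (Fin d → ℝ))}
    (hsnd : π.map Prod.snd = g) {h : (Fin d → ℝ) → ℝ} (hm : Measurable h) :
    ∫ p, h p.2 ∂π = ∫ x, h x ∂g := by
  rw [← hsnd, integral_map measurable_snd.aemeasurable hm.aestronglyMeasurable]

lemma prob_of_fst {f : Measure (Fin d → ℝ)} [IsProbabilityMeasure f]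
    {π : Measure ((Fin d → ℝ) × (Fin d → ℝ))} (hfst : π.map Prod.fst = f) :
    IsProbabilityMeasure π := by
  constructor
  have h := congrArg (fun m : Measure (Fin d → ℝ) => m Set.univ) hfst
  rw [Measure.map_apply measurable_fst MeasurableSet.univ, Set.preimage_univ] at h
  rw [h, measure_univ]

set_option maxHeartbeats 1000000 in
lemma coupling_lower_bound (f g : Measure (Fin d → ℝ))
    [IsProbabilityMeasure f] [IsProbabilityMeasure g]
    (hf : Integrable (fun x => ∑ i, x i ^ 2) f)
    (hg : Integrable (fun x => ∑ i, x i ^ 2) g)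
    (μ1 μ2 : Fin d → ℝ) (S1 S2 : Matrix (Fin d) (Fin d) ℝ)
    (hμ1 : μ1 = fun i => ∫ x, x i ∂f) (hμ2 : μ2 = fun i => ∫ x, x i ∂g)
    (hS1 : S1 = Matrix.of fun i j => ∫ x, (x i - μ1 i) * (x j - μ1 j) ∂f)
    (hS2 : S2 = Matrix.of fun i j => ∫ x, (x i - μ2 i) * (x j - μ2 j) ∂g)
    (T T' : Matrix (Fin d) (Fin d) ℝ) (hTpd : T.PosDef) (hTs : Tᵀ = T) (hTT' : T * T' = 1)
    (π : Measure ((Fin d → ℝ) × (Fin d → ℝ)))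
    (hfst : π.map Prod.fst = f) (hsnd : π.map Prod.snd = g) :
    (∑ i, (μ1 i - μ2 i) ^ 2) + S1.trace + S2.trace - (T * S1).trace - (T' * S2).trace
      ≤ ∫ p, ∑ i, (p.1 i - p.2 i) ^ 2 ∂π := by
  haveI : IsProbabilityMeasure π := prob_of_fst hfst
  -- measurability
  have m1 : ∀ i, Measurable fun x : Fin d → ℝ => x i - μ1 i :=
    fun i => (measurable_pi_apply i).sub measurable_const
  have m2 : ∀ i, Measurable fun x : Fin d → ℝ => x i - μ2 i :=
    fun i => (measurable_pi_apply i).sub measurable_const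
  have mc1 : ∀ i j, Measurable fun x : Fin d → ℝ => (x i - μ1 i) * (x j - μ1 j) :=
    fun i j => (m1 i).mul (m1 j)
  have mc2 : ∀ i j, Measurable fun x : Fin d → ℝ => (x i - μ2 i) * (x j - μ2 j) :=
    fun i j => (m2 i).mul (m2 j)
  -- first moments vanish
  have Ef1 : ∀ i, ∫ x, (x i - μ1 i) ∂f = 0 := by
    intro i
    rw [integral_sub (int_lin f hf i) (integrable_const _), integral_const, probReal_univ]
    simp [hμ1]
  have Ef2 : ∀ i, ∫ x, (x i - μ2 i) ∂g = 0 := by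
    intro i
    rw [integral_sub (int_lin g hg i) (integrable_const _), integral_const, probReal_univ]
    simp [hμ2]
  -- covariance entries
  have ES1 : ∀ i j, ∫ x, (x i - μ1 i) * (x j - μ1 j) ∂f = S1 i j := fun i j => by rw [hS1]; rfl
  have ES2 : ∀ i j, ∫ x, (x i - μ2 i) * (x j - μ2 j) ∂g = S2 i j := fun i j => by rw [hS2]; rfl
  have hS1symm : ∀ i j, S1 j i = S1 i j := by
    intro i j
    rw [hS1]
    show ∫ x, (x j - μ1 j) * (x i - μ1 i) ∂f = ∫ x, (x i - μ1 i) * (x j - μ1 j) ∂f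
    exact integral_congr_ae (Filter.Eventually.of_forall fun x => mul_comm _ _)
  have hS2symm : ∀ i j, S2 j i = S2 i j := by
    intro i j
    rw [hS2]
    show ∫ x, (x j - μ2 j) * (x i - μ2 i) ∂g = ∫ x, (x i - μ2 i) * (x j - μ2 j) ∂g
    exact integral_congr_ae (Filter.Eventually.of_forall fun x => mul_comm _ _)
  -- π-level integrabilities and integrals
  have Iu : ∀ i, Integrable (fun p : (Fin d → ℝ) × (Fin d → ℝ) => p.1 i - μ1 i) π :=
    fun i => lift_int_fst hfst (m1 i) ((int_lin f hf i).sub (integrable_const _))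
  have Iw : ∀ i, Integrable (fun p : (Fin d → ℝ) × (Fin d → ℝ) => p.2 i - μ2 i) π :=
    fun i => lift_int_snd hsnd (m2 i) ((int_lin g hg i).sub (integrable_const _))
  have Eu : ∀ i, ∫ p, (p.1 i - μ1 i) ∂π = 0 :=
    fun i => by rw [lift_integral_fst hfst (m1 i), Ef1 i]
  have Ew : ∀ i, ∫ p, (p.2 i - μ2 i) ∂π = 0 :=
    fun i => by rw [lift_integral_snd hsnd (m2 i), Ef2 i]
  have Ic1 : ∀ i j, Integrable (fun p : (Fin d → ℝ) × (Fin d → ℝ) =>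
      (p.1 i - μ1 i) * (p.1 j - μ1 j)) π :=
    fun i j => lift_int_fst hfst (mc1 i j) (int_cov f hf μ1 i j)
  have Ic2 : ∀ i j, Integrable (fun p : (Fin d → ℝ) × (Fin d → ℝ) =>
      (p.2 i - μ2 i) * (p.2 j - μ2 j)) π :=
    fun i j => lift_int_snd hsnd (mc2 i j) (int_cov g hg μ2 i j)
  have Ec1 : ∀ i j, ∫ p, (p.1 i - μ1 i) * (p.1 j - μ1 j) ∂π = S1 i j :=
    fun i j => by rw [lift_integral_fst hfst (mc1 i j), ES1 i j]
  have Ec2 : ∀ i j, ∫ p, (p.2 i - μ2 i) * (p.2 j - μ2 j) ∂π = S2 i j :=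
    fun i j => by rw [lift_integral_snd hsnd (mc2 i j), ES2 i j]
  have Icross : ∀ i j, Integrable (fun p : (Fin d → ℝ) × (Fin d → ℝ) =>
      (p.1 i - μ1 i) * (p.2 j - μ2 j)) π := by
    intro i j
    refine ((Ic1 i i).add (Ic2 j j)).mono
      (((m1 i).comp measurable_fst).mul ((m2 j).comp measurable_snd)).aestronglyMeasurable
      (Filter.Eventually.of_forall fun p => ?_)
    have h1 : (0:ℝ) ≤ (p.1 i - μ1 i) * (p.1 i - μ1 i) + (p.2 j - μ2 j) * (p.2 j - μ2 j) := by
      nlinarith [mul_self_nonneg (p.1 i - μ1 i), mul_self_nonneg (p.2 j - μ2 j)]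
    simp only [Pi.add_apply, Real.norm_eq_abs, abs_of_nonneg h1, abs_mul]
    nlinarith [sq_nonneg (|p.1 i - μ1 i| - |p.2 j - μ2 j|), abs_nonneg (p.1 i - μ1 i),
      abs_nonneg (p.2 j - μ2 j), sq_abs (p.1 i - μ1 i), sq_abs (p.2 j - μ2 j),
      abs_mul_abs_self (p.1 i - μ1 i), abs_mul_abs_self (p.2 j - μ2 j)]
  -- piece integrabilities
  have IA : Integrable (fun p : (Fin d → ℝ) × (Fin d → ℝ) =>
      ∑ i, (μ1 i - μ2 i) * (p.1 i - μ1 i)) π :=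
    integrable_finset_sum _ fun i _ => (Iu i).const_mul _
  have IB : Integrable (fun p : (Fin d → ℝ) × (Fin d → ℝ) =>
      ∑ i, (μ1 i - μ2 i) * (p.2 i - μ2 i)) π :=
    integrable_finset_sum _ fun i _ => (Iw i).const_mul _
  have IQ1 : Integrable (fun p : (Fin d → ℝ) × (Fin d → ℝ) =>
      ∑ i, (p.1 i - μ1 i) * (p.1 i - μ1 i)) π :=
    integrable_finset_sum _ fun i _ => Ic1 i i
  have IQ2 : Integrable (fun p : (Fin d → ℝ) × (Fin d → ℝ) =>
      ∑ i, (p.2 i - μ2 i) * (p.2 i - μ2 i)) π :=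
    integrable_finset_sum _ fun i _ => Ic2 i i
  have IT1 : Integrable (fun p : (Fin d → ℝ) × (Fin d → ℝ) =>
      ∑ i, ∑ j, T i j * ((p.1 i - μ1 i) * (p.1 j - μ1 j))) π :=
    integrable_finset_sum _ fun i _ => integrable_finset_sum _ fun j _ => (Ic1 i j).const_mul _
  have IT2 : Integrable (fun p : (Fin d → ℝ) × (Fin d → ℝ) =>
      ∑ i, ∑ j, T' i j * ((p.2 i - μ2 i) * (p.2 j - μ2 j))) π :=
    integrable_finset_sum _ fun i _ => integrable_finset_sum _ fun j _ => (Ic2 i j).const_mul _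
  -- piece integrals
  have EA : ∫ p, ∑ i, (μ1 i - μ2 i) * (p.1 i - μ1 i) ∂π = 0 := by
    rw [integral_finset_sum _ fun i _ => (Iu i).const_mul _]
    simp [integral_const_mul, Eu]
  have EB : ∫ p, ∑ i, (μ1 i - μ2 i) * (p.2 i - μ2 i) ∂π = 0 := by
    rw [integral_finset_sum _ fun i _ => (Iw i).const_mul _]
    simp [integral_const_mul, Ew]
  have EQ1 : ∫ p, ∑ i, (p.1 i - μ1 i) * (p.1 i - μ1 i) ∂π = S1.trace := by
    rw [integral_finset_sum _ fun i _ => Ic1 i i]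
    simp [Matrix.trace, Matrix.diag, Ec1]
  have EQ2 : ∫ p, ∑ i, (p.2 i - μ2 i) * (p.2 i - μ2 i) ∂π = S2.trace := by
    rw [integral_finset_sum _ fun i _ => Ic2 i i]
    simp [Matrix.trace, Matrix.diag, Ec2]
  have ET1 : ∫ p, ∑ i, ∑ j, T i j * ((p.1 i - μ1 i) * (p.1 j - μ1 j)) ∂π
      = (T * S1).trace := by
    rw [integral_finset_sum _ fun i _ => (integrable_finset_sum _ fun j _ => (Ic1 i j).const_mul (T i j) :
      Integrable (fun p : (Fin d → ℝ) × (Fin d → ℝ) => ∑ j, T i j * ((p.1 i - μ1 i) * (p.1 j - μ1 j))) π)]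
    have hrow : ∀ i, ∫ p, ∑ j, T i j * ((p.1 i - μ1 i) * (p.1 j - μ1 j)) ∂π
        = ∑ j, T i j * S1 i j := by
      intro i
      rw [integral_finset_sum _ fun j _ => (Ic1 i j).const_mul _]
      simp [integral_const_mul, Ec1]
    rw [Finset.sum_congr rfl fun i _ => hrow i]
    simp only [Matrix.trace, Matrix.diag, Matrix.mul_apply]
    exact Finset.sum_congr rfl fun i _ => Finset.sum_congr rfl fun j _ => by rw [hS1symm]
  have ET2 : ∫ p, ∑ i, ∑ j, T' i j * ((p.2 i - μ2 i) * (p.2 j - μ2 j)) ∂π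
      = (T' * S2).trace := by
    rw [integral_finset_sum _ fun i _ => (integrable_finset_sum _ fun j _ => (Ic2 i j).const_mul (T' i j) :
      Integrable (fun p : (Fin d → ℝ) × (Fin d → ℝ) => ∑ j, T' i j * ((p.2 i - μ2 i) * (p.2 j - μ2 j))) π)]
    have hrow : ∀ i, ∫ p, ∑ j, T' i j * ((p.2 i - μ2 i) * (p.2 j - μ2 j)) ∂π
        = ∑ j, T' i j * S2 i j := by
      intro i
      rw [integral_finset_sum _ fun j _ => (Ic2 i j).const_mul _]
      simp [integral_const_mul, Ec2]
    rw [Finset.sum_congr rfl fun i _ => hrow i]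
    simp only [Matrix.trace, Matrix.diag, Matrix.mul_apply]
    exact Finset.sum_congr rfl fun i _ => Finset.sum_congr rfl fun j _ => by rw [hS2symm]
  -- integrability of the lower bound function G and of F
  have IG : Integrable (fun p : (Fin d → ℝ) × (Fin d → ℝ) =>
      (∑ i, (μ1 i - μ2 i) ^ 2) + 2 * (∑ i, (μ1 i - μ2 i) * (p.1 i - μ1 i))
      - 2 * (∑ i, (μ1 i - μ2 i) * (p.2 i - μ2 i))
      + (∑ i, (p.1 i - μ1 i) * (p.1 i - μ1 i))
      + (∑ i, (p.2 i - μ2 i) * (p.2 i - μ2 i))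
      - (∑ i, ∑ j, T i j * ((p.1 i - μ1 i) * (p.1 j - μ1 j)))
      - (∑ i, ∑ j, T' i j * ((p.2 i - μ2 i) * (p.2 j - μ2 j)))) π :=
    ((((((integrable_const _).add (IA.const_mul 2)).sub (IB.const_mul 2)).add IQ1).add
      IQ2).sub IT1).sub IT2
  have hFeq : (fun p : (Fin d → ℝ) × (Fin d → ℝ) => ∑ i, (p.1 i - p.2 i) ^ 2)
      = fun p => ∑ i, ((μ1 i - μ2 i) ^ 2 + 2 * ((μ1 i - μ2 i) * (p.1 i - μ1 i))
        - 2 * ((μ1 i - μ2 i) * (p.2 i - μ2 i)) + (p.1 i - μ1 i) * (p.1 i - μ1 i)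
        + (p.2 i - μ2 i) * (p.2 i - μ2 i) - 2 * ((p.1 i - μ1 i) * (p.2 i - μ2 i))) :=
    funext fun p => Finset.sum_congr rfl fun i _ => by ring
  have IF : Integrable (fun p : (Fin d → ℝ) × (Fin d → ℝ) =>
      ∑ i, (p.1 i - p.2 i) ^ 2) π := by
    rw [hFeq]
    exact integrable_finset_sum _ fun i _ =>
      (((((integrable_const ((μ1 i - μ2 i) ^ 2)).add
        (((Iu i).const_mul (μ1 i - μ2 i)).const_mul 2)).sub
        (((Iw i).const_mul (μ1 i - μ2 i)).const_mul 2)).add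
        (Ic1 i i)).add (Ic2 i i)).sub ((Icross i i).const_mul 2)
  -- pointwise inequality
  have hle : ∀ p : (Fin d → ℝ) × (Fin d → ℝ),
      (∑ i, (μ1 i - μ2 i) ^ 2) + 2 * (∑ i, (μ1 i - μ2 i) * (p.1 i - μ1 i))
      - 2 * (∑ i, (μ1 i - μ2 i) * (p.2 i - μ2 i))
      + (∑ i, (p.1 i - μ1 i) * (p.1 i - μ1 i))
      + (∑ i, (p.2 i - μ2 i) * (p.2 i - μ2 i))
      - (∑ i, ∑ j, T i j * ((p.1 i - μ1 i) * (p.1 j - μ1 j)))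
      - (∑ i, ∑ j, T' i j * ((p.2 i - μ2 i) * (p.2 j - μ2 j)))
      ≤ ∑ i, (p.1 i - p.2 i) ^ 2 := by
    intro p
    have key := quad_ineq hTpd hTs hTT' (fun i => p.1 i - μ1 i) (fun i => p.2 i - μ2 i)
    rw [dot_quad T, dot_quad T'] at key
    have hdot : (fun i => p.1 i - μ1 i) ⬝ᵥ (fun i => p.2 i - μ2 i)
        = ∑ i, (p.1 i - μ1 i) * (p.2 i - μ2 i) := rfl
    rw [hdot] at key
    have hF : ∑ i, (p.1 i - p.2 i) ^ 2
        = (∑ i, (μ1 i - μ2 i) ^ 2) + 2 * (∑ i, (μ1 i - μ2 i) * (p.1 i - μ1 i))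
        - 2 * (∑ i, (μ1 i - μ2 i) * (p.2 i - μ2 i))
        + (∑ i, (p.1 i - μ1 i) * (p.1 i - μ1 i))
        + (∑ i, (p.2 i - μ2 i) * (p.2 i - μ2 i))
        - 2 * (∑ i, (p.1 i - μ1 i) * (p.2 i - μ2 i)) := by
      simp only [Finset.mul_sum, ← Finset.sum_add_distrib, ← Finset.sum_sub_distrib]
      exact Finset.sum_congr rfl fun i _ => by ring
    rw [hF]
    linarith [key]
  -- conclude
  have IGa : Integrable (fun p : (Fin d → ℝ) × (Fin d → ℝ) =>
      (∑ i, (μ1 i - μ2 i) ^ 2) + 2 * (∑ i, (μ1 i - μ2 i) * (p.1 i - μ1 i))) π :=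
    (integrable_const _).add (IA.const_mul 2)
  have IGb : Integrable (fun p : (Fin d → ℝ) × (Fin d → ℝ) =>
      (∑ i, (μ1 i - μ2 i) ^ 2) + 2 * (∑ i, (μ1 i - μ2 i) * (p.1 i - μ1 i))
      - 2 * (∑ i, (μ1 i - μ2 i) * (p.2 i - μ2 i))) π := IGa.sub (IB.const_mul 2)
  have IGc : Integrable (fun p : (Fin d → ℝ) × (Fin d → ℝ) =>
      (∑ i, (μ1 i - μ2 i) ^ 2) + 2 * (∑ i, (μ1 i - μ2 i) * (p.1 i - μ1 i))
      - 2 * (∑ i, (μ1 i - μ2 i) * (p.2 i - μ2 i))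
      + (∑ i, (p.1 i - μ1 i) * (p.1 i - μ1 i))) π := IGb.add IQ1
  have IGd : Integrable (fun p : (Fin d → ℝ) × (Fin d → ℝ) =>
      (∑ i, (μ1 i - μ2 i) ^ 2) + 2 * (∑ i, (μ1 i - μ2 i) * (p.1 i - μ1 i))
      - 2 * (∑ i, (μ1 i - μ2 i) * (p.2 i - μ2 i))
      + (∑ i, (p.1 i - μ1 i) * (p.1 i - μ1 i))
      + (∑ i, (p.2 i - μ2 i) * (p.2 i - μ2 i))) π := IGc.add IQ2
  have IGe : Integrable (fun p : (Fin d → ℝ) × (Fin d → ℝ) =>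
      (∑ i, (μ1 i - μ2 i) ^ 2) + 2 * (∑ i, (μ1 i - μ2 i) * (p.1 i - μ1 i))
      - 2 * (∑ i, (μ1 i - μ2 i) * (p.2 i - μ2 i))
      + (∑ i, (p.1 i - μ1 i) * (p.1 i - μ1 i))
      + (∑ i, (p.2 i - μ2 i) * (p.2 i - μ2 i))
      - (∑ i, ∑ j, T i j * ((p.1 i - μ1 i) * (p.1 j - μ1 j)))) π := IGd.sub IT1
  have hmono := integral_mono IG IF hle
  rw [integral_sub IGe IT2, integral_sub IGd IT1, integral_add IGc IQ2,
    integral_add IGb IQ1, integral_sub IGa (IB.const_mul 2),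
    integral_add (integrable_const _) (IA.const_mul 2),
    integral_const_mul, integral_const_mul, EA, EB, EQ1, EQ2, ET1, ET2,
    integral_const, probReal_univ] at hmono
  simp only [ENNReal.toReal_one, one_smul, mul_zero, add_zero, sub_zero] at hmono
  exact hmono

end Helpers

theorem stmt10 {d : ℕ} (f g : Measure (Fin d → ℝ))
    [IsProbabilityMeasure f] [IsProbabilityMeasure g]
    (hf : Integrable (fun x => ∑ i, x i ^ 2) f)
    (hg : Integrable (fun x => ∑ i, x i ^ 2) g)
    (μ1 μ2 : Fin d → ℝ) (S1 S2 : Matrix (Fin d) (Fin d) ℝ)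
    (hμ1 : μ1 = fun i => ∫ x, x i ∂f) (hμ2 : μ2 = fun i => ∫ x, x i ∂g)
    (hS1 : S1 = Matrix.of fun i j => ∫ x, (x i - μ1 i) * (x j - μ1 j) ∂f)
    (hS2 : S2 = Matrix.of fun i j => ∫ x, (x i - μ2 i) * (x j - μ2 j) ∂g)
    (h1 : S1.PosDef) (h2 : S2.PosDef)
    (h12 : (h1.posSemidef.sqrt * S2 * h1.posSemidef.sqrt).PosSemidef) :
    W2sq f g ≥ ∑ i, (μ1 i - μ2 i) ^ 2 + (S1 + S2 - (2 : ℝ) • h12.sqrt).trace := by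
  rw [ge_iff_le, W2sq]
  apply le_csInf
  · exact ⟨∫ p, ∑ i, (p.1 i - p.2 i) ^ 2 ∂(f.prod g), f.prod g,
      by simp [Measure.map_fst_prod, measure_univ], by simp [Measure.map_snd_prod, measure_univ], rfl⟩
  · rintro r ⟨π, hfst, hsnd, rfl⟩
    obtain ⟨T, T', hTpd, hTs, hTT', hTr1, hTr2⟩ := gelbrich_matrices h1 h2 h12
    have hcb := coupling_lower_bound f g hf hg μ1 μ2 S1 S2 hμ1 hμ2 hS1 hS2
      T T' hTpd hTs hTT' π hfst hsnd
    have htr : (S1 + S2 - (2 : ℝ) • h12.sqrt).trace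
        = S1.trace + S2.trace - 2 * h12.sqrt.trace := by
      rw [Matrix.trace_sub, Matrix.trace_add, Matrix.trace_smul, smul_eq_mul]
    rw [htr]
    linarith [hcb]
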